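/- Let P ⊆ ℝⁿ be a discrete point set, p ∈ P, and suppose C(p) = cone(p₁ − p, ..., p_k − p) for finitely many p₁,...,p_k ∈ P, and C(p) ≠ ℝⁿ. Let H = ∩ᵢ H_p⁻(pᵢ) where H_p⁻(q) = {x : ⟨x − p, q − p⟩ ≤ ½‖q − p‖²}. Then the set H ∩ (C(p) + p) is compact. -/

import Mathlib

open scoped RealInnerProductSpace
open Set

noncomputable section

abbrev E (n : ℕ) := EuclideanSpace ℝ (Fin n)

/-- `P` is discrete: every bounded set contains only finitely many points of `P`. -/
def IsDiscretePointSet {n : ℕ} (P : Set (E n)) : Prop :=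
  ∀ B : Set (E n), Bornology.IsBounded B → (P ∩ B).Finite

/-- The Voronoi cell of `p` relative to `P`. -/
def voronoiCell {n : ℕ} (P : Set (E n)) (p : E n) : Set (E n) :=
  {x | ∀ q ∈ P, dist x p ≤ dist x q}

/-- A polyhedron: a finite intersection of closed half-spaces. -/
def IsPolyhedron {n : ℕ} (S : Set (E n)) : Prop :=
  ∃ (k : ℕ) (y : Fin k → E n) (α : Fin k → ℝ),
    S = ⋂ i, {x : E n | (inner ℝ x (y i) : ℝ) ≤ α i}

/-- A polytope: a bounded polyhedron. -/
def IsPolytope {n : ℕ} (S : Set (E n)) : Prop :=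
  IsPolyhedron S ∧ Bornology.IsBounded S

/-- The half-space of points at least as close to `p` as to `q`. -/
def halfSpace {n : ℕ} (p q : E n) : Set (E n) :=
  {x : E n | (inner ℝ (x - p) (q - p) : ℝ) ≤ (1/2) * ‖q - p‖^2}

/-- The conic hull: all nonnegative combinations of finitely many elements of `M`. -/
def coneHull {n : ℕ} (M : Set (E n)) : Set (E n) :=
  {x | ∃ (k : ℕ) (v : Fin k → E n) (c : Fin k → ℝ),
    (∀ i, v i ∈ M) ∧ (∀ i, 0 ≤ c i) ∧ x = ∑ i, c i • v i}

/-- The direction cone of `p`: the conic hull of `P - p`. -/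
def dirCone {n : ℕ} (P : Set (E n)) (p : E n) : Set (E n) :=
  coneHull ((fun q => q - p) '' P)

/-- A cone is finitely generated if it is the conic hull of finitely many vectors. -/
def FinitelyGeneratedCone {n : ℕ} (C : Set (E n)) : Prop :=
  ∃ (k : ℕ) (v : Fin k → E n), C = coneHull (Set.range v)

/-- `q` is Voronoi relevant for `p`: dropping `halfSpace p q` strictly enlarges the
intersection defining the Voronoi cell. -/
def VoronoiRelevant {n : ℕ} (P : Set (E n)) (p q : E n) : Prop :=
  (⋂ r ∈ P \ {p}, halfSpace p r) ⊂ ⋂ r ∈ P \ {p, q}, halfSpace p r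

/-- Normal form for membership in the conic hull of a finite family. -/
lemma mem_coneHull_range_iff {n k : ℕ} (w : Fin k → E n) (x : E n) :
    x ∈ coneHull (Set.range w) ↔ ∃ c : Fin k → ℝ, (∀ i, 0 ≤ c i) ∧ x = ∑ i, c i • w i := by
  constructor
  · rintro ⟨m, u, c, hu, hc, rfl⟩
    choose ι hι using hu
    classical
    refine ⟨fun i => ∑ j ∈ Finset.univ.filter (fun j => ι j = i), c j, ?_, ?_⟩
    · intro i; exact Finset.sum_nonneg fun j _ => hc j
    · calc ∑ j, c j • u j = ∑ j, c j • w (ι j) := by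
            refine Finset.sum_congr rfl fun j _ => by rw [hι j]
        _ = ∑ i, ∑ j ∈ Finset.univ.filter (fun j => ι j = i), c j • w (ι j) := by
            rw [Finset.sum_fiberwise]
        _ = ∑ i, (∑ j ∈ Finset.univ.filter (fun j => ι j = i), c j) • w i := by
            refine Finset.sum_congr rfl fun i _ => ?_
            rw [Finset.sum_smul]
            refine Finset.sum_congr rfl fun j hj => ?_
            rw [(Finset.mem_filter.mp hj).2]
  · rintro ⟨c, hc, rfl⟩
    exact ⟨k, w, c, fun i => ⟨i, rfl⟩, hc, rfl⟩

lemma coneHull_smul {n : ℕ} {M : Set (E n)} {t : ℝ} (ht : 0 ≤ t) {x : E n}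
    (hx : x ∈ coneHull M) : t • x ∈ coneHull M := by
  obtain ⟨m, u, c, hu, hc, rfl⟩ := hx
  refine ⟨m, u, fun i => t * c i, hu, fun i => mul_nonneg ht (hc i), ?_⟩
  simp [Finset.smul_sum, smul_smul]

lemma coneHull_mono {n : ℕ} {M N : Set (E n)} (h : M ⊆ N) : coneHull M ⊆ coneHull N := by
  rintro x ⟨m, u, c, hu, hc, rfl⟩
  exact ⟨m, u, c, fun i => h (hu i), hc, rfl⟩

/-- Finitely generated cones are closed. -/
lemma isClosed_coneHull_range {n : ℕ} :
    ∀ k, ∀ w : Fin k → E n, IsClosed (coneHull (Set.range w)) := by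
  intro k
  induction k with
  | zero =>
    intro w
    have : coneHull (Set.range w) = {0} := by
      ext x
      rw [mem_coneHull_range_iff]
      simp
    rw [this]; exact isClosed_singleton
  | succ m ih =>
    intro w
    by_cases hli : LinearIndependent ℝ w
    · -- linearly independent: image of orthant under a closed embedding
      let L : (Fin (m + 1) → ℝ) →ₗ[ℝ] E n :=
        { toFun := fun c => ∑ i, c i • w i
          map_add' := by
            intro a b; simp [add_smul, Finset.sum_add_distrib]
          map_smul' := by
            intro t a; simp [Finset.smul_sum, smul_smul] }
      have hker : LinearMap.ker L = ⊥ := by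
        rw [LinearMap.ker_eq_bot']
        intro c hc
        funext i
        exact Fintype.linearIndependent_iff.mp hli c hc i
      have hemb := LinearMap.isClosedEmbedding_of_injective (f := L) hker
      have heq : coneHull (Set.range w) = L '' {c : Fin (m + 1) → ℝ | ∀ i, 0 ≤ c i} := by
        ext x
        rw [mem_coneHull_range_iff]
        constructor
        · rintro ⟨c, hc, rfl⟩; exact ⟨c, hc, rfl⟩
        · rintro ⟨c, hc, rfl⟩; exact ⟨c, hc, rfl⟩
      have hcl : IsClosed {c : Fin (m + 1) → ℝ | ∀ i, 0 ≤ c i} := by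
        have : {c : Fin (m + 1) → ℝ | ∀ i, 0 ≤ c i} = ⋂ i, {c | 0 ≤ c i} := by
          ext c; simp
        rw [this]
        exact isClosed_iInter fun i => isClosed_le continuous_const (continuous_apply i)
      rw [heq]
      exact hemb.isClosedMap _ hcl
    · -- linearly dependent: a union of cones on fewer generators
      obtain ⟨g, hgsum, i1, hi1⟩ := Fintype.not_linearIndependent_iff.mp hli
      classical
      have key : ∀ g : Fin (m + 1) → ℝ, (∑ i, g i • w i = 0) → (∃ i, 0 < g i) →
          ∀ c : Fin (m + 1) → ℝ, (∀ i, 0 ≤ c i) →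
          (∑ i, c i • w i) ∈ ⋃ j : Fin (m + 1), coneHull (Set.range (w ∘ j.succAbove)) := by
        intro g hgsum hpos c hc
        set s : Finset (Fin (m + 1)) := Finset.univ.filter (fun i => 0 < g i) with hs
        have hsne : s.Nonempty := by
          obtain ⟨i, hi⟩ := hpos
          exact ⟨i, Finset.mem_filter.mpr ⟨Finset.mem_univ i, hi⟩⟩
        obtain ⟨i₀, hi₀s, hmin⟩ := s.exists_min_image (fun i => c i / g i) hsne
        have hgi₀ : 0 < g i₀ := (Finset.mem_filter.mp hi₀s).2
        set t : ℝ := c i₀ / g i₀ with htdef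
        have ht : 0 ≤ t := div_nonneg (hc i₀) hgi₀.le
        set c' : Fin (m + 1) → ℝ := fun i => c i - t * g i with hc'
        have hc'nonneg : ∀ i, 0 ≤ c' i := by
          intro i
          by_cases hgi : 0 < g i
          · have := hmin i (Finset.mem_filter.mpr ⟨Finset.mem_univ i, hgi⟩)
            have : t * g i ≤ c i := by
              rw [← le_div_iff₀ hgi]; exact this
            simpa [hc'] using sub_nonneg.mpr this
          · push_neg at hgi
            have : t * g i ≤ 0 := mul_nonpos_of_nonneg_of_nonpos ht hgi
            have := sub_nonneg.mpr (this.trans (hc i))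
            simpa [hc'] using this
        have hc'i₀ : c' i₀ = 0 := by
          simp only [hc', htdef]
          field_simp
          ring
        have hsum : ∑ i, c' i • w i = ∑ i, c i • w i := by
          simp only [hc', sub_smul, Finset.sum_sub_distrib, mul_smul]
          rw [← Finset.smul_sum, hgsum, smul_zero, sub_zero]
        refine Set.mem_iUnion.mpr ⟨i₀, ?_⟩
        rw [mem_coneHull_range_iff (w ∘ i₀.succAbove)]
        refine ⟨fun j => c' (i₀.succAbove j), fun j => hc'nonneg _, ?_⟩
        have := Fin.sum_univ_succAbove (fun i => c' i • w i) i₀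
        rw [← hsum, this, hc'i₀, zero_smul, zero_add]
        rfl
      have heq : coneHull (Set.range w)
          = ⋃ j : Fin (m + 1), coneHull (Set.range (w ∘ j.succAbove)) := by
        apply Set.Subset.antisymm
        · intro x hx
          rw [mem_coneHull_range_iff] at hx
          obtain ⟨c, hc, rfl⟩ := hx
          rcases lt_or_gt_of_ne hi1 with hneg | hpos
          · refine key (fun i => -g i) ?_ ⟨i1, show 0 < -g i1 from neg_pos.mpr hneg⟩ c hc
            simp only [neg_smul]
            rw [Finset.sum_neg_distrib, hgsum, neg_zero]
          · exact key g hgsum ⟨i1, hpos⟩ c hc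
        · refine Set.iUnion_subset fun j => coneHull_mono ?_
          rintro y ⟨i, rfl⟩
          exact ⟨j.succAbove i, rfl⟩
      rw [heq]
      exact isClosed_iUnion_of_finite fun j => ih (w ∘ j.succAbove)

theorem stmt16 {n : ℕ} (P : Set (E n)) (hP : IsDiscretePointSet P) (p : E n) (hp : p ∈ P)
    (k : ℕ) (v : Fin k → E n) (hv : ∀ i, v i ∈ P)
    (hC : dirCone P p = coneHull (Set.range fun i => v i - p))
    (hne : dirCone P p ≠ Set.univ) :
    IsCompact ((⋂ i, halfSpace p (v i)) ∩ ((fun x => x + p) '' dirCone P p)) := by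
  rw [hC]
  set w : Fin k → E n := fun i => v i - p with hw
  set C : Set (E n) := coneHull (Set.range w) with hCdef
  set H : Set (E n) := ⋂ i, halfSpace p (v i) with hH
  have hCclosed : IsClosed C := isClosed_coneHull_range k w
  have hHclosed : IsClosed H := by
    refine isClosed_iInter fun i => ?_
    exact isClosed_le ((continuous_id.sub continuous_const).inner continuous_const)
      continuous_const
  have hTclosed : IsClosed ((fun x => x + p) '' C) :=
    (Homeomorph.addRight p).isClosedMap C hCclosed
  -- the inner-product bound coming from membership in `H`
  have hHbound : ∀ x ∈ H, ∀ i, (inner ℝ (x - p) (w i) : ℝ) ≤ (1/2) * ‖w i‖^2 := by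
    intro x hx i
    have := Set.mem_iInter.mp hx i
    exact this
  -- positivity: a nonzero element of C has positive inner product with some generator
  have hgpos : ∀ c ∈ C, c ≠ 0 → 0 < ∑ i, max 0 ((inner ℝ (c) (w i) : ℝ)) := by
    intro c hcC hc0
    have hnn : ∀ i ∈ Finset.univ, (0:ℝ) ≤ max 0 ((inner ℝ (c) (w i) : ℝ)) := fun i _ => le_max_left _ _
    rcases (Finset.sum_nonneg hnn).lt_or_eq with h | h
    · exact h
    · exfalso
      have hall := (Finset.sum_eq_zero_iff_of_nonneg hnn).mp h.symm
      have hle : ∀ i, ((inner ℝ (c) (w i) : ℝ)) ≤ 0 := by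
        intro i
        have := hall i (Finset.mem_univ i)
        calc ((inner ℝ (c) (w i) : ℝ)) ≤ max 0 ((inner ℝ (c) (w i) : ℝ)) := le_max_right _ _
          _ = 0 := this
      obtain ⟨lam, hlam, hcsum⟩ := (mem_coneHull_range_iff w c).mp hcC
      have : ‖c‖^2 = ∑ i, lam i * (inner ℝ (c) (w i) : ℝ) := by
        rw [← real_inner_self_eq_norm_sq]
        conv_lhs => rw [hcsum]
        rw [sum_inner]
        refine Finset.sum_congr rfl fun i _ => ?_
        rw [real_inner_smul_left, real_inner_comm]
        congr 1
        rw [← hcsum]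
      have hle2 : ‖c‖^2 ≤ 0 := by
        rw [this]
        exact Finset.sum_nonpos fun i _ => mul_nonpos_of_nonneg_of_nonpos (hlam i) (hle i)
      have : ‖c‖ = 0 := by nlinarith [norm_nonneg c, sq_nonneg ‖c‖]
      exact hc0 (norm_eq_zero.mp this)
  apply Metric.isCompact_of_isClosed_isBounded (hHclosed.inter hTclosed)
  -- boundedness
  by_cases h0 : ∀ c ∈ C, c = (0 : E n)
  · refine Bornology.IsBounded.subset (Metric.isBounded_closedBall (x := p) (r := 0)) ?_
    rintro x ⟨_, ⟨c, hc, rfl⟩⟩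
    simp [h0 c hc]
  · push_neg at h0
    obtain ⟨c0, hc0C, hc0⟩ := h0
    -- the compact set D
    set D : Set (E n) := Metric.sphere 0 1 ∩ C with hD
    have hDcomp : IsCompact D := (isCompact_sphere 0 1).inter_right hCclosed
    have hDne : D.Nonempty := by
      refine ⟨‖c0‖⁻¹ • c0, ?_, coneHull_smul (inv_nonneg.mpr (norm_nonneg c0)) hc0C⟩
      simp only [Metric.mem_sphere, dist_zero_right, norm_smul, norm_inv, norm_norm]
      rw [inv_mul_cancel₀ (norm_ne_zero_iff.mpr hc0)]
    set g : E n → ℝ := fun c => ∑ i, max 0 ((inner ℝ (c) (w i) : ℝ)) with hg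
    have hgcont : Continuous g := by
      apply continuous_finset_sum
      intro i _
      exact continuous_const.max (continuous_id.inner continuous_const)
    obtain ⟨u, huD, humin⟩ := hDcomp.exists_isMinOn hDne hgcont.continuousOn
    set ε : ℝ := g u with hε
    have hεpos : 0 < ε := by
      apply hgpos u huD.2
      intro hu0
      have := huD.1
      rw [hu0] at this
      simp at this
    set M : ℝ := ∑ i, (1/2) * ‖w i‖^2 with hM
    refine Bornology.IsBounded.subset (Metric.isBounded_closedBall (x := p) (r := M / ε)) ?_
    rintro x ⟨hxH, ⟨c, hcC, rfl⟩⟩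
    have hcp : c + p - p = c := by abel
    have hMnn : 0 ≤ M := Finset.sum_nonneg fun i _ => by positivity
    simp only [Metric.mem_closedBall, dist_eq_norm, hcp]
    rcases eq_or_ne c 0 with rfl | hcne
    · simp [le_div_iff₀ hεpos]; positivity
    · have hcnorm : 0 < ‖c‖ := norm_pos_iff.mpr hcne
      have huc : (‖c‖⁻¹ • c) ∈ D :=
        ⟨by simp [norm_smul, inv_mul_cancel₀ hcnorm.ne'], coneHull_smul (by positivity) hcC⟩
      have h1 : ε ≤ g (‖c‖⁻¹ • c) := humin huc
      have h2 : g (‖c‖⁻¹ • c) = ‖c‖⁻¹ * g c := by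
        rw [hg, Finset.mul_sum]
        refine Finset.sum_congr rfl fun i _ => ?_
        rw [real_inner_smul_left, mul_max_of_nonneg _ _ (by positivity : (0:ℝ) ≤ ‖c‖⁻¹),
          mul_zero]
      have h3 : g c ≤ M := by
        refine Finset.sum_le_sum fun i _ => ?_
        refine max_le (by positivity) ?_
        have := hHbound _ hxH i
        rwa [hcp] at this
      have h4 : ε * ‖c‖ ≤ M := by
        have : ε * ‖c‖ ≤ (‖c‖⁻¹ * g c) * ‖c‖ := by
          apply mul_le_mul_of_nonneg_right _ (norm_nonneg c)
          rw [← h2]; exact h1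
        calc ε * ‖c‖ ≤ (‖c‖⁻¹ * g c) * ‖c‖ := this
          _ = g c := by field_simp
          _ ≤ M := h3
      rw [le_div_iff₀ hεpos]
      linarith [h4]
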